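/- Let M be a minion of idempotent Boolean functions containing, for every odd m, an m-ary function g_m that is e-flippable (for a fixed constant e) with m ≥ 3(e+1). Then M contains either the xor functions of all odd arities, or almost negations of unboundedly large arities. Specifically: for each sufficiently large odd m, partitioning the variables of g_m into an odd number of blocks of odd sizes between e+1 and 2e+2 and identifying variables within blocks yields a function g' which is either the xor of its arity, or the 'complement-of-xor with idempotent endpoints' function h (h(U)=1 iff U is the full set, or U ≠ ∅ and |U| is even), and in the latter case identifying pairs of variables of h yields an almost negation. -/

import Mathlib

/-- The almost negation of arity m+1, as a function on subsets. -/
def ANset (m : ℕ) (U : Finset (Fin (m + 1))) : Bool :=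
  if U = Finset.univ then true
  else if U = ∅ then false
  else ! decide (Fin.last m ∈ U)

open Finset

lemma L1 (m a c : ℕ) (hc : c ≤ m) :
    ((Finset.univ : Finset (Fin m)).filter (fun j => a ≤ j.val ∧ j.val < c)).card = c - a := by
  have h : ∀ t ∈ Finset.Ico a c, t < m := fun t ht => lt_of_lt_of_le (Finset.mem_Ico.1 ht).2 hc
  have : (Finset.univ : Finset (Fin m)).filter (fun j => a ≤ j.val ∧ j.val < c)
      = (Finset.Ico a c).attachFin h := by
    ext j
    simp [Finset.mem_attachFin, Finset.mem_Ico]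
  rw [this, Finset.card_attachFin, Nat.card_Ico]

def blk (b n m : ℕ) (j : Fin m) : Fin (n + 1) :=
  ⟨min (j.val / b) n, Nat.lt_succ_of_le (min_le_right _ _)⟩

lemma fib_blk (b n m : ℕ) (hb : 0 < b) (hm : n * b ≤ m) (i : Fin (n + 1)) :
    ((Finset.univ : Finset (Fin m)).filter (fun j => blk b n m j = i)).card
      = if i.val < n then b else m - n * b := by
  by_cases hi : i.val < n
  · rw [if_pos hi]
    have hstep : (Finset.univ : Finset (Fin m)).filter (fun j => blk b n m j = i)
        = (Finset.univ : Finset (Fin m)).filter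
            (fun j => i.val * b ≤ j.val ∧ j.val < (i.val + 1) * b) := by
      ext j
      simp only [blk, Finset.mem_filter, Finset.mem_univ, true_and, Fin.ext_iff]
      have hdiv1 : i.val ≤ j.val / b ↔ i.val * b ≤ j.val := Nat.le_div_iff_mul_le hb
      have hdiv2 : j.val / b < i.val + 1 ↔ j.val < (i.val + 1) * b := Nat.div_lt_iff_lt_mul hb
      omega
    rw [hstep, L1]
    · have : (i.val + 1) * b = i.val * b + b := by ring
      omega
    · calc (i.val + 1) * b ≤ n * b := Nat.mul_le_mul_right _ (by omega)
        _ ≤ m := hm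
  · rw [if_neg hi]
    have hin : i.val = n := by omega
    have hstep : (Finset.univ : Finset (Fin m)).filter (fun j => blk b n m j = i)
        = (Finset.univ : Finset (Fin m)).filter
            (fun j => n * b ≤ j.val ∧ j.val < m) := by
      ext j
      simp only [blk, Finset.mem_filter, Finset.mem_univ, true_and, Fin.ext_iff]
      have hdiv : n ≤ j.val / b ↔ n * b ≤ j.val := Nat.le_div_iff_mul_le hb
      have hj := j.isLt
      omega
    rw [hstep, L1 _ _ _ le_rfl]

lemma card_P {m p : ℕ} (π : Fin m → Fin p) (U : Finset (Fin p)) :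
    ((Finset.univ : Finset (Fin m)).filter (fun j => π j ∈ U)).card
      = ∑ i ∈ U, ((Finset.univ : Finset (Fin m)).filter (fun j => π j = i)).card := by
  rw [Finset.card_eq_sum_card_fiberwise (f := π) (t := U)
    (s := (Finset.univ : Finset (Fin m)).filter (fun j => π j ∈ U))
    (fun x hx => (Finset.mem_filter.1 hx).2)]
  refine Finset.sum_congr rfl (fun i hi => ?_)
  congr 1
  ext j
  simp only [Finset.mem_filter, Finset.mem_univ, true_and]
  constructor
  · rintro ⟨-, h⟩; exact h
  · intro h; exact ⟨h ▸ hi, h⟩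

section key
variable {m e : ℕ} {g : Finset (Fin m) → Bool}

lemma flip_insert
    (hg : ∀ U : Finset (Fin m), e < U.card → U.card < m - e →
      ∀ x ∉ U, ∀ y ∈ U, g (U.erase y) ≠ g U ∧ g (insert x U) ≠ g U)
    (U : Finset (Fin m)) (x : Fin m) (hx : x ∉ U)
    (h1 : e < U.card) (h2 : U.card < m - e) :
    g (insert x U) = !g U := by
  have hne : U.Nonempty := Finset.card_pos.1 (by omega)
  obtain ⟨y, hy⟩ := hne
  have := (hg U h1 h2 x hx y hy).2
  cases hgu : g U <;> cases hgi : g (insert x U) <;> simp_all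

lemma chain_up
    (hg : ∀ U : Finset (Fin m), e < U.card → U.card < m - e →
      ∀ x ∉ U, ∀ y ∈ U, g (U.erase y) ≠ g U ∧ g (insert x U) ≠ g U) :
    ∀ (k : ℕ) (U V : Finset (Fin m)), U ⊆ V → V.card = U.card + k →
      e < U.card → V.card < m - e →
      g V = (g U != decide (k % 2 = 1)) := by
  intro k
  induction k with
  | zero =>
    intro U V hUV hcard _ _
    have : U = V := Finset.eq_of_subset_of_card_le hUV (by omega)
    subst this
    simp
  | succ k ih =>
    intro U V hUV hcard hU hV
    have hlt : U.card < V.card := by omega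
    have hss : U ⊂ V := hUV.ssubset_of_ne (by intro h; subst h; omega)
    obtain ⟨x, hxV, hxU⟩ := Finset.exists_of_ssubset hss
    have hsub : insert x U ⊆ V := Finset.insert_subset hxV hUV
    have hcardi : (insert x U).card = U.card + 1 := Finset.card_insert_of_notMem hxU
    have h1 : g V = (g (insert x U) != decide (k % 2 = 1)) := by
      apply ih _ _ hsub (by omega) (by omega) hV
    have h2 : g (insert x U) = !g U :=
      flip_insert hg U x hxU hU (by omega)
    rw [h1, h2]
    have hpar : decide ((k + 1) % 2 = 1) = !decide (k % 2 = 1) := by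
      by_cases h : k % 2 = 1
      · simp [h]; omega
      · have : k % 2 = 0 := by omega
        simp [h]; omega
    rw [hpar]
    cases g U <;> cases decide (k % 2 = 1) <;> rfl

lemma key_parity (hm : 3 * (e + 1) ≤ m)
    (hg : ∀ U : Finset (Fin m), e < U.card → U.card < m - e →
      ∀ x ∉ U, ∀ y ∈ U, g (U.erase y) ≠ g U ∧ g (insert x U) ≠ g U) :
    ∃ c : Bool, ∀ U : Finset (Fin m), e < U.card → U.card < m - e →
      g U = (c != decide (U.card % 2 = 1)) := by
  obtain ⟨W, -, hW⟩ := Finset.exists_subset_card_eq (s := (Finset.univ : Finset (Fin m))) (n := e + 1)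
    (by rw [Finset.card_univ, Fintype.card_fin]; omega)
  refine ⟨g W != decide ((e + 1) % 2 = 1), ?_⟩
  have hsmall : ∀ A B : Finset (Fin m), A.card = e + 1 → B.card = e + 1 → g A = g B := by
    intro A B hA hB
    have hAu : A ⊆ A ∪ B := Finset.subset_union_left
    have hBu : B ⊆ A ∪ B := Finset.subset_union_right
    have hcu : (A ∪ B).card ≤ 2 * (e + 1) := by
      have := Finset.card_union_le A B
      omega
    have hcu2 : (A ∪ B).card < m - e := by omega
    have hAc : (A ∪ B).card = A.card + ((A ∪ B).card - (e + 1)) := by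
      have := Finset.card_le_card hAu
      omega
    have hBc : (A ∪ B).card = B.card + ((A ∪ B).card - (e + 1)) := by
      have := Finset.card_le_card hBu
      omega
    have h1 := chain_up hg _ A (A ∪ B) hAu hAc (by omega) hcu2
    have h2 := chain_up hg _ B (A ∪ B) hBu hBc (by omega) hcu2
    rw [h1] at h2
    cases hp : decide (((A ∪ B).card - (e + 1)) % 2 = 1) <;> rw [hp] at h2 <;>
      simpa using h2
  intro U hU1 hU2
  obtain ⟨U₀, hU₀sub, hU₀⟩ := Finset.exists_subset_card_eq (s := U) (n := e + 1) (by omega)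
  have hchain := chain_up hg (U.card - (e + 1)) U₀ U hU₀sub (by omega) (by omega) hU2
  rw [hchain, hsmall U₀ W hU₀ hW]
  have : decide ((U.card - (e + 1)) % 2 = 1)
      = (decide ((e + 1) % 2 = 1) != decide (U.card % 2 = 1)) := by
    by_cases h1 : (e + 1) % 2 = 1 <;> by_cases h2 : U.card % 2 = 1 <;>
      · simp [h1, h2]
        omega
  rw [this]
  cases g W <;> cases decide ((e + 1) % 2 = 1) <;> cases decide (U.card % 2 = 1) <;> rfl
end key

lemma blk_card (b n m : ℕ) (hb : 0 < b) (hm : n * b ≤ m) (U : Finset (Fin (n + 1))) :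
    ((Finset.univ : Finset (Fin m)).filter (fun j => blk b n m j ∈ U)).card
      = ∑ i ∈ U, (if i.val < n then b else m - n * b) := by
  rw [card_P]
  exact Finset.sum_congr rfl fun i _ => fib_blk b n m hb hm i

lemma sum_low {p : ℕ} (w : Fin p → ℕ) (e : ℕ) (hw : ∀ i, e < w i)
    (U : Finset (Fin p)) (hU : U.Nonempty) : e < ∑ i ∈ U, w i := by
  obtain ⟨i, hi⟩ := hU
  calc e < w i := hw i
    _ ≤ ∑ i ∈ U, w i := Finset.single_le_sum (fun _ _ => Nat.zero_le _) hi

lemma sum_high {p : ℕ} (w : Fin p → ℕ) (e : ℕ) (hw : ∀ i, e < w i)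
    (U : Finset (Fin p)) (hU : U ≠ Finset.univ) :
    ∑ i ∈ U, w i + e < ∑ i, w i := by
  have hc : Uᶜ.Nonempty := by
    rw [← Finset.card_pos, Finset.card_compl]
    have : U.card < Fintype.card (Fin p) := by
      rcases lt_or_eq_of_le (Finset.card_le_univ U) with h | h
      · simpa using h
      · exact absurd ((Finset.card_eq_iff_eq_univ U).mp (by simpa using h)) hU
    omega
  have hsplit : ∑ i ∈ U, w i + ∑ i ∈ Uᶜ, w i = ∑ i, w i := Finset.sum_add_sum_compl U w
  have := sum_low w e hw Uᶜ hc
  omega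

lemma sum_parity_odd {p : ℕ} (w : Fin p → ℕ) (U : Finset (Fin p))
    (hw : ∀ i, w i % 2 = 1) : (∑ i ∈ U, w i) % 2 = U.card % 2 := by
  rw [Finset.sum_nat_mod]
  have : ∑ i ∈ U, w i % 2 = U.card := by
    rw [Finset.sum_congr rfl fun i _ => hw i]
    simp
  rw [this]

lemma dich (e : ℕ) (M : ∀ n : ℕ, Set (Finset (Fin n) → Bool))
    (hminor : ∀ (n m : ℕ) (g : Finset (Fin m) → Bool) (π : Fin m → Fin n),
      g ∈ M m →
      (fun U : Finset (Fin n) => g (Finset.univ.filter (fun j => π j ∈ U))) ∈ M n)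
    (hid : ∀ (n : ℕ) (f : Finset (Fin n) → Bool), f ∈ M n →
      f ∅ = false ∧ f Finset.univ = true)
    (hflip : ∀ m : ℕ, Odd m → 3 * (e + 1) ≤ m →
      ∃ g ∈ M m, ∀ U : Finset (Fin m), e < U.card → U.card < m - e →
        ∀ x ∉ U, ∀ y ∈ U, g (U.erase y) ≠ g U ∧ g (insert x U) ≠ g U)
    (k : ℕ) :
    ((fun U : Finset (Fin (2 * k + 1)) => decide (U.card % 2 = 1)) ∈ M (2 * k + 1))
      ∨ ANset k ∈ M (k + 1) := by
  set bo : ℕ := 2 * ((e + 1) / 2) + 1 with hbo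
  set be : ℕ := 2 * ((e + 2) / 2) with hbe
  have hboodd : bo % 2 = 1 := by omega
  have hbeeven : be % 2 = 0 := by omega
  have hboe : e < bo := by omega
  have hbee : e < be := by omega
  set A : ℕ := k * bo with hA
  set B : ℕ := k * be with hB
  have hBeven : B % 2 = 0 := by
    rw [hB, Nat.mul_mod, hbeeven]; simp
  set m : ℕ := 2 * (3 * (e + 1) + A + B) + 1 with hm'
  have hmodd : Odd m := ⟨3 * (e + 1) + A + B, by omega⟩
  have hm3 : 3 * (e + 1) ≤ m := by omega
  obtain ⟨g, hgM, hgflip⟩ := hflip m hmodd hm3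
  obtain ⟨hg0, hg1⟩ := hid m g hgM
  obtain ⟨c, hc⟩ := key_parity hm3 hgflip
  have h2A : 2 * k * bo = 2 * A := by rw [hA]; ring
  cases c with
  | false =>
    left
    have hbm : 2 * k * bo ≤ m := by omega
    set π : Fin m → Fin (2 * k + 1) := blk bo (2 * k) m with hπ
    have hmem := hminor (2 * k + 1) m g π hgM
    set w : Fin (2 * k + 1) → ℕ := fun i => if i.val < 2 * k then bo else m - 2 * k * bo
      with hw
    have hwodd : ∀ i, w i % 2 = 1 := by
      intro i; rw [hw]; dsimp only; split <;> omega
    have hwe : ∀ i, e < w i := by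
      intro i; rw [hw]; dsimp only; split <;> omega
    have hcard : ∀ U : Finset (Fin (2 * k + 1)),
        (Finset.univ.filter (fun j => π j ∈ U)).card = ∑ i ∈ U, w i := by
      intro U
      rw [hπ, blk_card bo (2 * k) m (by omega) hbm U]
    have htot : ∑ i, w i = m := by
      rw [← hcard Finset.univ]
      rw [Finset.filter_true_of_mem (fun j _ => Finset.mem_univ _)]
      simp
    have heq : (fun U : Finset (Fin (2 * k + 1)) =>
        g (Finset.univ.filter (fun j => π j ∈ U)))
        = fun U : Finset (Fin (2 * k + 1)) => decide (U.card % 2 = 1) := by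
      funext U
      by_cases hU0 : U = ∅
      · subst hU0
        simp [hg0]
      by_cases hU1 : U = Finset.univ
      · subst hU1
        rw [Finset.filter_true_of_mem (fun j _ => Finset.mem_univ _), hg1]
        have : (Finset.univ : Finset (Fin (2 * k + 1))).card % 2 = 1 := by
          rw [Finset.card_univ, Fintype.card_fin]; omega
        simp only [this]
        simp
      · have hne : U.Nonempty := Finset.nonempty_iff_ne_empty.2 hU0
        have h1 : e < (Finset.univ.filter (fun j => π j ∈ U)).card := by
          rw [hcard]; exact sum_low w e hwe U hne
        have h2 : (Finset.univ.filter (fun j => π j ∈ U)).card < m - e := by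
          have := sum_high w e hwe U hU1
          rw [hcard]; omega
        have hpar : (Finset.univ.filter (fun j => π j ∈ U)).card % 2 = U.card % 2 := by
          rw [hcard]; exact sum_parity_odd w U hwodd
        rw [hc _ h1 h2, Bool.false_bne]
        exact decide_eq_decide.mpr (by omega)
    rw [← heq]
    exact hmem
  | true =>
    right
    have hkbe : k * be = B := hB.symm
    have hbm : k * be ≤ m := by omega
    set π : Fin m → Fin (k + 1) := blk be k m with hπ
    have hmem := hminor (k + 1) m g π hgM
    set w : Fin (k + 1) → ℕ := fun i => if i.val < k then be else m - k * be with hw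
    have hwe : ∀ i, e < w i := by
      intro i; rw [hw]; dsimp only; split <;> omega
    have hw2 : ∀ i : Fin (k + 1), w i % 2 = if i = Fin.last k then 1 else 0 := by
      intro i
      have hiv : i.val < k ↔ ¬ i = Fin.last k := by
        rw [Fin.ext_iff, Fin.val_last]
        omega
      rw [hw]; dsimp only
      by_cases h : i = Fin.last k
      · rw [if_neg (fun hc => (hiv.mp hc) h), if_pos h]
        omega
      · rw [if_pos (hiv.mpr h), if_neg h]
        omega
    have hcard : ∀ U : Finset (Fin (k + 1)),
        (Finset.univ.filter (fun j => π j ∈ U)).card = ∑ i ∈ U, w i := by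
      intro U
      rw [hπ, blk_card be k m (by omega) hbm U]
    have htot : ∑ i, w i = m := by
      rw [← hcard Finset.univ]
      rw [Finset.filter_true_of_mem (fun j _ => Finset.mem_univ _)]
      simp
    have hpar : ∀ U : Finset (Fin (k + 1)),
        (∑ i ∈ U, w i) % 2 = if Fin.last k ∈ U then 1 else 0 := by
      intro U
      rw [Finset.sum_nat_mod,
        Finset.sum_congr rfl (fun i _ => hw2 i),
        Finset.sum_ite_eq' U (Fin.last k) (fun _ => 1)]
      split <;> rfl
    have heq : (fun U : Finset (Fin (k + 1)) =>
        g (Finset.univ.filter (fun j => π j ∈ U))) = ANset k := by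
      funext U
      have hune : (Finset.univ : Finset (Fin (k + 1))) ≠ ∅ := by
        intro h
        have := Finset.mem_univ (0 : Fin (k + 1))
        rw [h] at this
        simp at this
      by_cases hU0 : U = ∅
      · subst hU0
        rw [ANset, if_neg (Ne.symm hune), if_pos rfl]
        simp [hg0]
      by_cases hU1 : U = Finset.univ
      · subst hU1
        rw [ANset, if_pos rfl]
        rw [Finset.filter_true_of_mem (fun j _ => Finset.mem_univ _), hg1]
      · rw [ANset, if_neg hU1, if_neg hU0]
        have hne : U.Nonempty := Finset.nonempty_iff_ne_empty.2 hU0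
        have h1 : e < (Finset.univ.filter (fun j => π j ∈ U)).card := by
          rw [hcard]; exact sum_low w e hwe U hne
        have h2 : (Finset.univ.filter (fun j => π j ∈ U)).card < m - e := by
          have := sum_high w e hwe U hU1
          rw [hcard]; omega
        have hparU : (Finset.univ.filter (fun j => π j ∈ U)).card % 2
            = if Fin.last k ∈ U then 1 else 0 := by
          rw [hcard]; exact hpar U
        rw [hc _ h1 h2, Bool.true_bne]
        have hiff : ((Finset.univ.filter (fun j => π j ∈ U)).card % 2 = 1)
            ↔ (Fin.last k ∈ U) := by
          by_cases hl : Fin.last k ∈ U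
          · rw [if_pos hl] at hparU
            exact ⟨fun _ => hl, fun _ => hparU⟩
          · rw [if_neg hl] at hparU
            exact iff_of_false (by omega) hl
        exact congrArg (fun b => !b) (decide_eq_decide.mpr hiff)
    rw [heq] at hmem
    exact hmem

lemma xor_down (M : ∀ n : ℕ, Set (Finset (Fin n) → Bool))
    (hminor : ∀ (n m : ℕ) (g : Finset (Fin m) → Bool) (π : Fin m → Fin n),
      g ∈ M m →
      (fun U : Finset (Fin n) => g (Finset.univ.filter (fun j => π j ∈ U))) ∈ M n)
    (k₀ n : ℕ) (hn : n % 2 = 1) (hge : 2 * k₀ + 1 ≤ n)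
    (hx : (fun U : Finset (Fin n) => decide (U.card % 2 = 1)) ∈ M n) :
    (fun U : Finset (Fin (2 * k₀ + 1)) => decide (U.card % 2 = 1)) ∈ M (2 * k₀ + 1) := by
  set π : Fin n → Fin (2 * k₀ + 1) := blk 1 (2 * k₀) n with hπ
  have hmem := hminor (2 * k₀ + 1) n _ π hx
  have hcard : ∀ U : Finset (Fin (2 * k₀ + 1)),
      (Finset.univ.filter (fun j => π j ∈ U)).card
        = ∑ i ∈ U, (if i.val < 2 * k₀ then 1 else n - 2 * k₀ * 1) := by
    intro U
    rw [hπ, blk_card 1 (2 * k₀) n (by omega) (by omega) U]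
  have heq : (fun U : Finset (Fin (2 * k₀ + 1)) =>
      decide ((Finset.univ.filter (fun j => π j ∈ U)).card % 2 = 1))
      = fun U : Finset (Fin (2 * k₀ + 1)) => decide (U.card % 2 = 1) := by
    funext U
    have hpar : (Finset.univ.filter (fun j => π j ∈ U)).card % 2 = U.card % 2 := by
      rw [hcard]
      exact sum_parity_odd _ U (by intro i; split <;> omega)
    exact decide_eq_decide.mpr (by omega)
  rw [← heq]
  exact hmem

/-- an idempotent minion containing e-flippable functions of all
sufficiently large odd arities contains all odd-arity xors or almost negations
of unboundedly large arities. -/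
theorem stmt_17 (e : ℕ) (M : ∀ n : ℕ, Set (Finset (Fin n) → Bool))
    (hminor : ∀ (n m : ℕ) (g : Finset (Fin m) → Bool) (π : Fin m → Fin n),
      g ∈ M m →
      (fun U : Finset (Fin n) => g (Finset.univ.filter (fun j => π j ∈ U))) ∈ M n)
    (hid : ∀ (n : ℕ) (f : Finset (Fin n) → Bool), f ∈ M n →
      f ∅ = false ∧ f Finset.univ = true)
    (hflip : ∀ m : ℕ, Odd m → 3 * (e + 1) ≤ m →
      ∃ g ∈ M m, ∀ U : Finset (Fin m), e < U.card → U.card < m - e →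
        ∀ x ∉ U, ∀ y ∈ U, g (U.erase y) ≠ g U ∧ g (insert x U) ≠ g U) :
    (∀ m : ℕ, Odd m →
      (fun U : Finset (Fin m) => decide (U.card % 2 = 1)) ∈ M m)
    ∨
    (∀ B : ℕ, ∃ m : ℕ, B ≤ m ∧ ANset m ∈ M (m + 1)) := by
  by_cases hall : ∀ n : ℕ, Odd n →
      (fun U : Finset (Fin n) => decide (U.card % 2 = 1)) ∈ M n
  · exact Or.inl hall
  · right
    push_neg at hall
    obtain ⟨n₀, hodd₀, hnot⟩ := hall
    obtain ⟨k₁, rfl⟩ : ∃ k₁, n₀ = 2 * k₁ + 1 := by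
      have := Nat.odd_iff.mp hodd₀
      exact ⟨n₀ / 2, by omega⟩
    intro B
    refine ⟨max B (2 * k₁ + 1), le_max_left _ _, ?_⟩
    rcases dich e M hminor hid hflip (max B (2 * k₁ + 1)) with hx | hAN
    · exact absurd (xor_down M hminor k₁ (2 * max B (2 * k₁ + 1) + 1) (by omega)
        (by have := le_max_right B (2 * k₁ + 1); omega) hx) hnot
    · exact hAN
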